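/- (Or-product theorem.) Let G and H be simple graphs on finite vertex sets and let m, n, k be positive integers. Define the or-product G ⊙ H to be the simple graph on V(G) × V(H) in which (u,v) and (u',v') are adjacent if and only if u is adjacent to u' in G or v is adjacent to v' in H. If there exist k mutually orthogonal m-colorings of G and k mutually orthogonal n-colorings of H, then for every subgraph S of G ⊙ H there exist k mutually orthogonal (m·n)-colorings of S. In particular, given mutually orthogonal m-colorings A₁, …, A_k of G and mutually orthogonal n-colorings B₁, …, B_k of H, the colorings (u,v) ↦ (A_i(u), B_i(v)) (with colors in Fin m × Fin n ≃ Fin (m·n)) are proper colorings of G ⊙ H that are pairwise orthogonal. -/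

import Mathlib

/-- A proper `n`-coloring of a simple graph `G`. -/
def IsProperColoring {V : Type*} (G : SimpleGraph V) (n : ℕ) (C : V → Fin n) : Prop :=
  ∀ u v, G.Adj u v → C u ≠ C v

/-- Two `n`-colorings are orthogonal if whenever two distinct vertices share a color
in the first, they have distinct colors in the second. -/
def OrthogonalColorings {V : Type*} {n : ℕ} (C₁ C₂ : V → Fin n) : Prop :=
  ∀ u v, u ≠ v → C₁ u = C₁ v → C₂ u ≠ C₂ v

/-- The or-product of graphs `G` and `H`: vertices `(u, v)` and `(u', v')` are
adjacent iff `u ∼ u'` in `G` or `v ∼ v'` in `H`. -/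
def orProduct {α β : Type*} (G : SimpleGraph α) (H : SimpleGraph β) :
    SimpleGraph (α × β) where
  Adj p q := G.Adj p.1 q.1 ∨ H.Adj p.2 q.2
  symm := by
    constructor
    rintro p q (h | h)
    · exact Or.inl h.symm
    · exact Or.inr h.symm
  loopless := by
    constructor
    rintro p (h | h)
    · exact G.irrefl h
    · exact H.irrefl h

/-- Or-product theorem: if `G` has `k` mutually orthogonal `m`-colorings and `H` has
`k` mutually orthogonal `n`-colorings, then every subgraph `S` of `G ⊙ H` has `k`
mutually orthogonal `(m·n)`-colorings; moreover the explicit product colorings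
`(u, v) ↦ (Aᵢ u, Bᵢ v)` are proper colorings of `G ⊙ H` that are pairwise orthogonal. -/
theorem stmt_17 {α β : Type*} [Fintype α] [Fintype β]
    (G : SimpleGraph α) (H : SimpleGraph β) (m n k : ℕ)
    (hm : 0 < m) (hn : 0 < n) (hk : 0 < k)
    (A : Fin k → α → Fin m) (B : Fin k → β → Fin n)
    (hA : ∀ i, IsProperColoring G m (A i))
    (hAorth : ∀ i j, i ≠ j → OrthogonalColorings (A i) (A j))
    (hB : ∀ i, IsProperColoring H n (B i))
    (hBorth : ∀ i j, i ≠ j → OrthogonalColorings (B i) (B j)) :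
    (∀ S : SimpleGraph (α × β), S ≤ orProduct G H →
      ∃ D : Fin k → α × β → Fin (m * n),
        (∀ i, IsProperColoring S (m * n) (D i)) ∧
        (∀ i j, i ≠ j → OrthogonalColorings (D i) (D j))) ∧
    ((∀ i, IsProperColoring (orProduct G H) (m * n)
        (fun p => finProdFinEquiv (A i p.1, B i p.2))) ∧
      (∀ i j, i ≠ j → OrthogonalColorings
        (fun p : α × β => finProdFinEquiv (A i p.1, B i p.2))
        (fun p : α × β => finProdFinEquiv (A j p.1, B j p.2)))) := by
  have hproper : ∀ i, IsProperColoring (orProduct G H) (m * n)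
      (fun p => finProdFinEquiv (A i p.1, B i p.2)) := by
    intro i p q hadj heq
    have h2 : (A i p.1, B i p.2) = (A i q.1, B i q.2) := finProdFinEquiv.injective heq
    have hA1 := congrArg Prod.fst h2
    have hB1 := congrArg Prod.snd h2
    rcases hadj with h | h
    · exact hA i p.1 q.1 h hA1
    · exact hB i p.2 q.2 h hB1
  have horth : ∀ i j, i ≠ j → OrthogonalColorings
      (fun p : α × β => finProdFinEquiv (A i p.1, B i p.2))
      (fun p : α × β => finProdFinEquiv (A j p.1, B j p.2)) := by
    intro i j hij p q hpq heq1 heq2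
    have h1 : (A i p.1, B i p.2) = (A i q.1, B i q.2) := finProdFinEquiv.injective heq1
    have h2 : (A j p.1, B j p.2) = (A j q.1, B j q.2) := finProdFinEquiv.injective heq2
    by_cases hfst : p.1 = q.1
    · have hsnd : p.2 ≠ q.2 := fun h => hpq (Prod.ext hfst h)
      exact hBorth i j hij p.2 q.2 hsnd (congrArg Prod.snd h1) (congrArg Prod.snd h2)
    · exact hAorth i j hij p.1 q.1 hfst (congrArg Prod.fst h1) (congrArg Prod.fst h2)
  refine ⟨fun S hS => ⟨fun i p => finProdFinEquiv (A i p.1, B i p.2),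
    fun i p q h => hproper i p q (hS h), horth⟩, hproper, horth⟩
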